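/- There exists a constant C_h > 0, depending only on θ and γ, such that 1 − h(t)/h(θ) ≥ C_h·|t − θ| for all t ∈ (0,1). -/

import Mathlib

/-- The deterministic drift function
`h(t) = (t(1−t))^{−γ}·t·(1−θ)` for `t ≤ θ` and `(t(1−t))^{−γ}·θ·(1−t)` for `t > θ`. -/
noncomputable def driftFun (θ γ : ℝ) (t : ℝ) : ℝ :=
  if t ≤ θ then (t * (1 - t)) ^ (-γ) * (t * (1 - θ)) else (t * (1 - t)) ^ (-γ) * (θ * (1 - t))

/-- Bernoulli-type inequality for exponents in `[0,1]`. -/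
lemma driftFun_bernoulli {x α : ℝ} (hx : 0 ≤ x) (h0 : 0 ≤ α) (h1 : α ≤ 1) :
    x ^ α ≤ 1 + α * (x - 1) := by
  have := rpow_one_add_le_one_add_mul_self (s := x - 1) (by linarith) h0 h1
  simpa using this

/-- Key step: linear lower bound for `1 - d/D` when `d ≤ m^α`, `D = b^α`, `m ≤ b`. -/
lemma driftFun_step {b m α d D : ℝ} (hb : 0 < b) (hm : 0 < m)
    (hα0 : 0 ≤ α) (hα1 : α ≤ 1)
    (hd : d ≤ m ^ α) (hD : D = b ^ α) : α * (1 - m / b) ≤ 1 - d / D := by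
  have hDpos : 0 < D := hD ▸ Real.rpow_pos_of_pos hb α
  have hratio : d / D ≤ (m / b) ^ α := by
    rw [hD, Real.div_rpow hm.le hb.le]
    gcongr
  have hx : (0:ℝ) ≤ m / b := by positivity
  have hbern := driftFun_bernoulli hx hα0 hα1
  nlinarith [hratio, hbern]

/-- **Linear drop of the drift function** (the estimate below (4.26)): there exists a
constant `C_h > 0`, depending only on `θ` and `γ`, such that
`1 − h(t)/h(θ) ≥ C_h |t − θ|` for every `t ∈ (0,1)`. -/
theorem driftFun_linear_drop
    (θ γ : ℝ) (hθ0 : 0 < θ) (hθ1 : θ < 1) (hγ0 : 0 ≤ γ) (hγ1 : γ < 1) :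
    ∃ Ch : ℝ, 0 < Ch ∧
      ∀ t ∈ Set.Ioo (0 : ℝ) 1, Ch * |t - θ| ≤ 1 - driftFun θ γ t / driftFun θ γ θ := by
  refine ⟨1 - γ, by linarith, ?_⟩
  rintro t ⟨ht0, ht1⟩
  have hb : (0:ℝ) < θ * (1 - θ) := by nlinarith
  have hα0 : (0:ℝ) ≤ 1 - γ := by linarith
  have hα1 : (1:ℝ) - γ ≤ 1 := by linarith
  have hDθ : driftFun θ γ θ = (θ * (1 - θ)) ^ (1 - γ) := by
    rw [driftFun, if_pos le_rfl, show (1:ℝ) - γ = -γ + 1 by ring,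
      Real.rpow_add hb, Real.rpow_one]
  -- expand `m ^ (1-γ) = m ^ (-γ) * m`
  have hexp : ∀ m : ℝ, 0 < m → m ^ ((1:ℝ) - γ) = m ^ (-γ) * m := fun m hm => by
    rw [show (1:ℝ) - γ = -γ + 1 by ring, Real.rpow_add hm, Real.rpow_one]
  rcases le_or_gt t θ with h | h
  · -- case t ≤ θ : take m = t*(1-θ)
    have hm : (0:ℝ) < t * (1 - θ) := by nlinarith
    have hmb : t * (1 - θ) ≤ θ * (1 - θ) := by nlinarith
    have hd : driftFun θ γ t ≤ (t * (1 - θ)) ^ ((1:ℝ) - γ) := by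
      rw [driftFun, if_pos h, hexp _ hm]
      have : (t * (1 - t)) ^ (-γ) ≤ (t * (1 - θ)) ^ (-γ) :=
        Real.rpow_le_rpow_of_nonpos hm (by nlinarith) (by linarith)
      exact mul_le_mul_of_nonneg_right this hm.le
    have hkey := driftFun_step hb hm hα0 hα1 hd hDθ
    have habs : |t - θ| = θ - t := by rw [abs_of_nonpos (by linarith)]; ring
    have hfrac : t * (1 - θ) / (θ * (1 - θ)) = t / θ := by
      rw [mul_div_mul_right _ _ (by linarith : (1:ℝ) - θ ≠ 0)]
    rw [habs]
    rw [hfrac] at hkey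
    have h1 : θ - t ≤ 1 - t / θ := by
      have : 1 - t / θ = (θ - t) / θ := by field_simp
      rw [this, le_div_iff₀ hθ0]
      nlinarith
    nlinarith
  · -- case θ < t : take m = θ*(1-t)
    have hm : (0:ℝ) < θ * (1 - t) := by nlinarith
    have hd : driftFun θ γ t ≤ (θ * (1 - t)) ^ ((1:ℝ) - γ) := by
      rw [driftFun, if_neg (not_le.mpr h), hexp _ hm]
      have : (t * (1 - t)) ^ (-γ) ≤ (θ * (1 - t)) ^ (-γ) :=
        Real.rpow_le_rpow_of_nonpos hm (by nlinarith) (by linarith)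
      exact mul_le_mul_of_nonneg_right this hm.le
    have hkey := driftFun_step hb hm hα0 hα1 hd hDθ
    have habs : |t - θ| = t - θ := abs_of_pos (by linarith)
    have hfrac : θ * (1 - t) / (θ * (1 - θ)) = (1 - t) / (1 - θ) := by
      rw [mul_div_mul_left _ _ (ne_of_gt hθ0)]
    rw [habs]
    rw [hfrac] at hkey
    have h1θ : (0:ℝ) < 1 - θ := by linarith
    have h1 : t - θ ≤ 1 - (1 - t) / (1 - θ) := by
      have : 1 - (1 - t) / (1 - θ) = (t - θ) / (1 - θ) := by field_simp; ring
      rw [this, le_div_iff₀ h1θ]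
      nlinarith
    nlinarith
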